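/- arXiv:2112.13233 — 2 statements merged into one kernel-verified Lean document; each statement's English description precedes it below -/
import Mathlib

section
/- Let (X,f) be a densely aperiodic topological dynamical system with M_f = X (the closure of the union of all minimal sets equals X). Then every basic set has empty interior, i.e., is continuously decisive. -/
open Set

/-- The full orbit `{fⁿ(x) : n ∈ ℤ}` of a point under a homeomorphism. -/
def orbitZ {X : Type*} [TopologicalSpace X] (f : X ≃ₜ X) (x : X) : Set X :=
  {y | ∃ n : ℤ, (f.toEquiv ^ n) x = y}

/-- `O(A) = ⋃_{n ∈ ℤ} fⁿ(A)`. -/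
def orbitSetZ {X : Type*} [TopologicalSpace X] (f : X ≃ₜ X) (A : Set X) : Set X :=
  ⋃ n : ℤ, (f.toEquiv ^ n) '' A

/-- `O⁺(A) = ⋃_{n ≥ 0} fⁿ(A)`. -/
def orbitSetP {X : Type*} [TopologicalSpace X] (f : X ≃ₜ X) (A : Set X) : Set X :=
  ⋃ n : ℕ, (f.toEquiv ^ (n : ℤ)) '' A

/-- `O⁻(A) = ⋃_{n ≤ 0} fⁿ(A)`. -/
def orbitSetN {X : Type*} [TopologicalSpace X] (f : X ≃ₜ X) (A : Set X) : Set X :=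
  ⋃ n : ℕ, (f.toEquiv ^ (-(n : ℤ))) '' A

/-- The ω-limit set of a point. -/
def omegaSet {X : Type*} [TopologicalSpace X] (f : X ≃ₜ X) (x : X) : Set X :=
  ⋂ n : ℕ, closure {y | ∃ m : ℕ, n ≤ m ∧ (f.toEquiv ^ (m : ℤ)) x = y}

/-- The α-limit set of a point. -/
def alphaSet {X : Type*} [TopologicalSpace X] (f : X ≃ₜ X) (x : X) : Set X :=
  ⋂ n : ℕ, closure {y | ∃ m : ℕ, n ≤ m ∧ (f.toEquiv ^ (-(m : ℤ))) x = y}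

/-- A minimal set: nonempty, closed, invariant, and every orbit in it is dense in it. -/
def IsMinimalSet {X : Type*} [TopologicalSpace X] (f : X ≃ₜ X) (M : Set X) : Prop :=
  M.Nonempty ∧ IsClosed M ∧ f '' M = M ∧ ∀ x ∈ M, M ⊆ closure (orbitZ f x)

/-- `M_f`: the closure of the union of all minimal sets. -/
def minimalUnion {X : Type*} [TopologicalSpace X] (f : X ≃ₜ X) : Set X :=
  closure (⋃₀ {M | IsMinimalSet f M})

/-- A wandering point. -/
def IsWandering {X : Type*} [TopologicalSpace X] (f : X ≃ₜ X) (x : X) : Prop :=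
  ∃ U : Set X, IsOpen U ∧ x ∈ U ∧ ∀ n : ℤ, n ≠ 0 → (f.toEquiv ^ n) '' U ∩ U = ∅

/-- `Ω_f`: the set of non-wandering points. -/
def nonWandering {X : Type*} [TopologicalSpace X] (f : X ≃ₜ X) : Set X :=
  {x | ¬ IsWandering f x}

/-- A quasi-section: a closed set every open neighborhood of which has full orbit. -/
def IsQuasiSection {X : Type*} [TopologicalSpace X] (f : X ≃ₜ X) (A : Set X) : Prop :=
  IsClosed A ∧ ∀ U : Set X, IsOpen U → A ⊆ U → orbitSetZ f U = Set.univ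

/-- A minimal quasi-section (minimal w.r.t. inclusion among quasi-sections). -/
def IsMinimalQuasiSection {X : Type*} [TopologicalSpace X] (f : X ≃ₜ X) (A : Set X) : Prop :=
  IsQuasiSection f A ∧ ∀ B : Set X, IsQuasiSection f B → B ⊆ A → B = A

/-- A basic set: a quasi-section meeting every orbit in at most one point. -/
def IsBasicSet {X : Type*} [TopologicalSpace X] (f : X ≃ₜ X) (A : Set X) : Prop :=
  IsQuasiSection f A ∧ ∀ x : X, (orbitZ f x ∩ A).Subsingleton

/-- A minimal basic set (minimal w.r.t. inclusion among basic sets). -/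
def IsMinimalBasicSet {X : Type*} [TopologicalSpace X] (f : X ≃ₜ X) (A : Set X) : Prop :=
  IsBasicSet f A ∧ ∀ B : Set X, IsBasicSet f B → B ⊆ A → B = A

/-- Densely aperiodic: the points with infinite orbit are dense. -/
def DenselyAperiodic {X : Type*} [TopologicalSpace X] (f : X ≃ₜ X) : Prop :=
  Dense {x : X | (orbitZ f x).Infinite}


private lemma perm_fix_zpow {X : Type*} (e : Equiv.Perm X) (z : X) (h : e z = z) :
    ∀ n : ℤ, (e ^ n) z = z := by
  intro n
  induction n using Int.induction_on with
  | zero => simp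
  | succ k ih => rw [zpow_add_one, Equiv.Perm.mul_apply, h, ih]
  | pred k ih =>
      have h' : e⁻¹ z = z := by
        conv_lhs => rw [← h]
        simp
      rw [zpow_sub_one, Equiv.Perm.mul_apply, h', ih]

private lemma cont_zpow {X : Type*} [TopologicalSpace X] (f : X ≃ₜ X) (n : ℤ) :
    Continuous fun x => (f.toEquiv ^ n) x := by
  induction n using Int.induction_on with
  | zero => simpa using continuous_id'
  | succ k ih =>
      have h : ∀ x : X, (f.toEquiv ^ ((k : ℤ) + 1)) x = (f.toEquiv ^ (k : ℤ)) (f x) := by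
        intro x; rw [zpow_add_one, Equiv.Perm.mul_apply]; rfl
      simp only [h]
      exact ih.comp f.continuous
  | pred k ih =>
      have h : ∀ x : X, (f.toEquiv ^ (-(k : ℤ) - 1)) x = (f.toEquiv ^ (-(k : ℤ))) (f.symm x) := by
        intro x; rw [zpow_sub_one, Equiv.Perm.mul_apply]; rfl
      simp only [h]
      exact ih.comp f.symm.continuous

private lemma mem_zpow_of_invariant {X : Type*} [TopologicalSpace X] (f : X ≃ₜ X) (M : Set X)
    (h : f '' M = M) : ∀ n : ℤ, ∀ z ∈ M, (f.toEquiv ^ n) z ∈ M := by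
  have h1 : ∀ z ∈ M, f z ∈ M := fun z hz => h ▸ Set.mem_image_of_mem f hz
  have h2 : ∀ z ∈ M, f.symm z ∈ M := by
    intro z hz
    rw [← h] at hz
    rcases hz with ⟨w, hw, rfl⟩
    simpa using hw
  intro n
  induction n using Int.induction_on with
  | zero => intro z hz; simpa using hz
  | succ k ih =>
      intro z hz
      rw [zpow_add_one, Equiv.Perm.mul_apply]
      exact ih _ (h1 z hz)
  | pred k ih =>
      intro z hz
      rw [zpow_sub_one, Equiv.Perm.mul_apply]
      exact ih _ (h2 z hz)

private lemma orbit_finite_of_periodic {X : Type*} [TopologicalSpace X] (f : X ≃ₜ X) (z : X)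
    (n : ℤ) (hn : n ≠ 0) (h : (f.toEquiv ^ n) z = z) : (orbitZ f z).Finite := by
  set e := f.toEquiv with he
  set N : ℕ := n.natAbs with hN
  have hN0 : 0 < (N : ℤ) := by
    have := Int.natAbs_pos.mpr hn
    exact_mod_cast this
  have hNfix : (e ^ (N : ℤ)) z = z := by
    rcases Int.natAbs_eq n with h1 | h1
    · rw [← hN] at h1
      rw [← h1]; exact h
    · have h2 : (e ^ (N : ℤ)) z = (e ^ (N : ℤ)) ((e ^ n) z) := by rw [h]
      rw [h2, ← Equiv.Perm.mul_apply, ← zpow_add]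
      have h3 : (N : ℤ) + n = 0 := by rw [h1]; ring
      rw [h3, zpow_zero, Equiv.Perm.one_apply]
  apply Set.Finite.subset (Set.finite_range fun r : Fin N => (e ^ ((r : ℕ) : ℤ)) z)
  rintro w ⟨m, rfl⟩
  have h1 : m % (N : ℤ) + (N : ℤ) * (m / (N : ℤ)) = m := Int.emod_add_mul_ediv m N
  have h2 : 0 ≤ m % (N : ℤ) := Int.emod_nonneg m (by omega)
  have h3 : m % (N : ℤ) < N := Int.emod_lt_of_pos m hN0
  refine ⟨⟨(m % (N : ℤ)).toNat, by omega⟩, ?_⟩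
  have hcast : (((m % (N : ℤ)).toNat : ℕ) : ℤ) = m % (N : ℤ) := Int.toNat_of_nonneg h2
  show (e ^ (((m % (N : ℤ)).toNat : ℕ) : ℤ)) z = (e ^ m) z
  rw [hcast]
  conv_rhs => rw [← h1]
  rw [zpow_add, Equiv.Perm.mul_apply, zpow_mul, perm_fix_zpow _ _ hNfix]

theorem stmt12 {X : Type*} [TopologicalSpace X] [CompactSpace X] [T2Space X] [Nonempty X] (f : X ≃ₜ X)
    (hf : DenselyAperiodic f) (hM : minimalUnion f = Set.univ)
    (B : Set X) (hB : IsBasicSet f B) :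
    interior B = ∅ := by
  by_contra hne
  rw [← Ne, ← Set.nonempty_iff_ne_empty] at hne
  set V := interior B with hV
  have hVo : IsOpen V := isOpen_interior
  have hVB : V ⊆ B := interior_subset
  have hdense : Dense (⋃₀ {M | IsMinimalSet f M}) := by
    rw [dense_iff_closure_eq]; exact hM
  obtain ⟨y, hyV, hyU⟩ := hdense.inter_open_nonempty V hVo hne
  obtain ⟨M, hMmin, hyM⟩ := hyU
  have hinv := mem_zpow_of_invariant f M hMmin.2.2.1
  have key : ∃ n : ℤ, n ≠ 0 ∧ (f.toEquiv ^ n) y ∈ V := by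
    by_contra hk
    push_neg at hk
    -- M ∩ V ⊆ {y}
    have hMV : ∀ z, z ∈ M → z ∈ V → z = y := by
      intro z hzM hzV
      by_contra hzy
      have hzc : z ∈ closure (orbitZ f y) := hMmin.2.2.2 y hyM hzM
      rw [mem_closure_iff] at hzc
      obtain ⟨w, hwVy, m, rfl⟩ := hzc (V \ {y}) (hVo.sdiff isClosed_singleton) ⟨hzV, hzy⟩
      rcases eq_or_ne m 0 with rfl | hm0
      · exact hwVy.2 (by simp)
      · exact hk m hm0 hwVy.1
    have hMorb : ∀ z ∈ M, ∃ m : ℤ, (f.toEquiv ^ m) y = z := by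
      intro z hzM
      have hyc : y ∈ closure (orbitZ f z) := hMmin.2.2.2 z hzM hyM
      rw [mem_closure_iff] at hyc
      obtain ⟨w, hwV, m, rfl⟩ := hyc V hVo hyV
      have hwM : (f.toEquiv ^ m) z ∈ M := hinv m z hzM
      have heq : (f.toEquiv ^ m) z = y := hMV _ hwM hwV
      refine ⟨-m, ?_⟩
      rw [← heq, ← Equiv.Perm.mul_apply, ← zpow_add]
      simp
    have hMcpt : IsCompact M := hMmin.2.1.isCompact
    have hopen : ∀ m : ℤ, IsOpen ((f.toEquiv ^ m) '' V) := by
      intro m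
      have himg : (f.toEquiv ^ m) '' V = (fun x => (f.toEquiv ^ (-m)) x) ⁻¹' V := by
        ext w
        constructor
        · rintro ⟨v, hv, rfl⟩
          show (f.toEquiv ^ (-m)) ((f.toEquiv ^ m) v) ∈ V
          rw [← Equiv.Perm.mul_apply, ← zpow_add]
          simpa using hv
        · intro hw
          refine ⟨(f.toEquiv ^ (-m)) w, hw, ?_⟩
          rw [← Equiv.Perm.mul_apply, ← zpow_add]
          simp
      rw [himg]
      exact hVo.preimage (cont_zpow f (-m))
    have hcover : M ⊆ ⋃ m : ℤ, (f.toEquiv ^ m) '' V := by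
      intro z hz
      obtain ⟨m, hm⟩ := hMorb z hz
      exact Set.mem_iUnion.mpr ⟨m, y, hyV, hm⟩
    obtain ⟨t, ht⟩ := hMcpt.elim_finite_subcover _ hopen hcover
    have hMfin : M.Finite := by
      apply Set.Finite.subset (t.finite_toSet.image fun m => (f.toEquiv ^ m) y)
      intro z hz
      have hz' := ht hz
      rw [Set.mem_iUnion₂] at hz'
      obtain ⟨m, hmt, v, hvV, rfl⟩ := hz'
      have hvM : v ∈ M := by
        have h4 := hinv (-m) _ hz
        rwa [← Equiv.Perm.mul_apply, ← zpow_add, neg_add_cancel, zpow_zero,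
          Equiv.Perm.one_apply] at h4
      have : v = y := hMV _ hvM hvV
      exact ⟨m, hmt, by rw [this]⟩
    have horb : orbitZ f y ⊆ M := by
      rintro w ⟨m, rfl⟩
      exact hinv m y hyM
    have hofin : (orbitZ f y).Finite := hMfin.subset horb
    have hmaps : Set.MapsTo (fun m : ℤ => (f.toEquiv ^ m) y) Set.univ (orbitZ f y) :=
      fun m _ => ⟨m, rfl⟩
    obtain ⟨a, -, b, -, hab, heq⟩ := Set.infinite_univ.exists_ne_map_eq_of_mapsTo hmaps hofin
    have hfix : (f.toEquiv ^ (a - b)) y = y := by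
      have h5 : (f.toEquiv ^ (-b)) ((f.toEquiv ^ a) y) =
          (f.toEquiv ^ (-b)) ((f.toEquiv ^ b) y) := by
        rw [heq]
      rw [← Equiv.Perm.mul_apply, ← zpow_add, ← Equiv.Perm.mul_apply, ← zpow_add] at h5
      have h6 : -b + a = a - b := by ring
      have h7 : -b + b = 0 := by ring
      rw [h6, h7, zpow_zero, Equiv.Perm.one_apply] at h5
      exact h5
    exact hk (a - b) (sub_ne_zero.mpr hab) (by rw [hfix]; exact hyV)
  obtain ⟨n, hn0, hnV⟩ := key
  have hyB : y ∈ orbitZ f y ∩ B := ⟨⟨0, by simp⟩, hVB hyV⟩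
  have hnB : (f.toEquiv ^ n) y ∈ orbitZ f y ∩ B := ⟨⟨n, rfl⟩, hVB hnV⟩
  have hper : (f.toEquiv ^ n) y = y := hB.2 y hnB hyB
  have hWo : IsOpen (V ∩ (fun x => (f.toEquiv ^ n) x) ⁻¹' V) :=
    hVo.inter (hVo.preimage (cont_zpow f n))
  have hyW : y ∈ V ∩ (fun x => (f.toEquiv ^ n) x) ⁻¹' V := by
    refine ⟨hyV, ?_⟩
    show (f.toEquiv ^ n) y ∈ V
    rw [hper]; exact hyV
  obtain ⟨z, hzW, hzap⟩ := hf.inter_open_nonempty _ hWo ⟨y, hyW⟩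
  have h1 : z ∈ orbitZ f z ∩ B := ⟨⟨0, by simp⟩, hVB hzW.1⟩
  have h2 : (f.toEquiv ^ n) z ∈ orbitZ f z ∩ B := ⟨⟨n, rfl⟩, hVB hzW.2⟩
  have hzper : (f.toEquiv ^ n) z = z := hB.2 z h2 h1
  exact hzap (orbit_finite_of_periodic f z n hn0 hzper)
end

section
/- Let X be a nonempty compact subset of ℝ and f : X → X a homeomorphism. Then the set inf_f := { inf O(x) : x ∈ X } is a basic set: it is a closed quasi-section and |O(x) ∩ inf_f| ≤ 1 for every x ∈ X. -/
open Set

section Helpers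

variable {Y : Type*} [TopologicalSpace Y] (f : Y ≃ₜ Y)

lemma contZpow (n : ℤ) : Continuous fun z : Y => (f.toEquiv ^ n) z := by
  induction n using Int.induction_on with
  | zero => simpa using continuous_id'
  | succ k ih =>
      have h : ∀ z : Y, (f.toEquiv ^ ((k : ℤ) + 1)) z = (f.toEquiv ^ (k : ℤ)) (f z) := by
        intro z
        rw [zpow_add_one, Equiv.Perm.mul_apply]
        rfl
      simp only [h]
      exact ih.comp f.continuous
  | pred k ih =>
      have h : ∀ z : Y, (f.toEquiv ^ (-(k : ℤ) - 1)) z = (f.toEquiv ^ (-(k : ℤ))) (f.symm z) := by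
        intro z
        rw [zpow_sub_one, Equiv.Perm.mul_apply]
        rfl
      simp only [h]
      exact ih.comp f.symm.continuous

lemma zpow_apply_zpow (n m : ℤ) (z : Y) :
    (f.toEquiv ^ n) ((f.toEquiv ^ m) z) = (f.toEquiv ^ (n + m)) z := by
  rw [← Equiv.Perm.mul_apply, ← zpow_add]

lemma mem_orbitZ_self (x : Y) : x ∈ orbitZ f x := ⟨0, rfl⟩

lemma orbit_closure_maps (x : Y) (n : ℤ) :
    Set.MapsTo (fun z => (f.toEquiv ^ n) z) (closure (orbitZ f x)) (closure (orbitZ f x)) := by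
  have h1 : Set.MapsTo (fun z => (f.toEquiv ^ n) z) (orbitZ f x) (orbitZ f x) := by
    rintro z ⟨m, rfl⟩
    exact ⟨n + m, (zpow_apply_zpow f n m x).symm⟩
  exact h1.closure (contZpow f n)

end Helpers

theorem stmt16 (X : Set ℝ) (hne : X.Nonempty) (hX : IsCompact X)
    (f : X ≃ₜ X) :
    IsBasicSet f {x : X | ∃ y : X, (x : ℝ) = sInf ((↑) '' orbitZ f y)} := by
  have hXcl : IsClosed X := hX.isClosed
  have hemb := hXcl.isClosedEmbedding_subtypeVal
  -- basic facts about the images of orbits in ℝ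
  have hsub : ∀ y : X, ((↑) '' orbitZ f y : Set ℝ) ⊆ X := by
    rintro y _ ⟨z, _, rfl⟩; exact z.2
  have hbdd : ∀ y : X, BddBelow ((↑) '' orbitZ f y : Set ℝ) :=
    fun y => hX.bddBelow.mono (hsub y)
  have hneS : ∀ y : X, ((↑) '' orbitZ f y : Set ℝ).Nonempty :=
    fun y => ⟨y, y, mem_orbitZ_self f y, rfl⟩
  have hIci : ∀ y : X, closure ((↑) '' orbitZ f y : Set ℝ) ⊆
      Ici (sInf ((↑) '' orbitZ f y)) :=
    fun y => closure_minimal (fun a ha => csInf_le (hbdd y) ha) isClosed_Ici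
  have hkey : ∀ y : X, sInf ((↑) '' orbitZ f y) ∈ ((↑) '' closure (orbitZ f y) : Set ℝ) := by
    intro y
    have h1 := csInf_mem_closure (hneS y) (hbdd y)
    rwa [hemb.closure_image_eq] at h1
  -- characterization of membership
  have hchar : ∀ x : X, (∃ y : X, (x : ℝ) = sInf ((↑) '' orbitZ f y)) ↔
      ∀ n : ℤ, (x : ℝ) ≤ (((f.toEquiv ^ n) x : X) : ℝ) := by
    intro x
    constructor
    · rintro ⟨y, hx⟩ n
      obtain ⟨m, hmcl, hm⟩ := hkey y
      have hmx : m = x := Subtype.ext (by rw [hm, ← hx])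
      subst hmx
      have h2 : (f.toEquiv ^ n) m ∈ closure (orbitZ f y) := orbit_closure_maps f y n hmcl
      have h3 : (((f.toEquiv ^ n) m : X) : ℝ) ∈ closure ((↑) '' orbitZ f y : Set ℝ) := by
        rw [hemb.closure_image_eq]
        exact ⟨_, h2, rfl⟩
      have := hIci y h3
      rw [hx]
      exact this
    · intro h
      refine ⟨x, le_antisymm ?_ (csInf_le (hbdd x) ⟨x, mem_orbitZ_self f x, rfl⟩)⟩
      refine le_csInf (hneS x) ?_
      rintro a ⟨z, ⟨n, rfl⟩, rfl⟩
      exact h n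
  constructor
  · constructor
    · -- closed
      have : {x : X | ∃ y : X, (x : ℝ) = sInf ((↑) '' orbitZ f y)} =
          ⋂ n : ℤ, {x : X | (x : ℝ) ≤ (((f.toEquiv ^ n) x : X) : ℝ)} := by
        ext x
        simp only [mem_setOf_eq, mem_iInter]
        exact hchar x
      rw [this]
      refine isClosed_iInter fun n => isClosed_le continuous_subtype_val ?_
      exact continuous_subtype_val.comp (contZpow f n)
    · -- quasi-section
      intro U hU hAU
      refine eq_univ_iff_forall.mpr fun p => ?_
      obtain ⟨m, hmcl, hm⟩ := hkey p
      have hmA : m ∈ {x : X | ∃ y : X, (x : ℝ) = sInf ((↑) '' orbitZ f y)} := ⟨p, hm⟩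
      have hmU : m ∈ U := hAU hmA
      obtain ⟨z, hzU, n, hz⟩ := mem_closure_iff.mp hmcl U hU hmU
      refine mem_iUnion.mpr ⟨-n, z, hzU, ?_⟩
      rw [← hz, zpow_apply_zpow]
      simp
  · -- subsingleton
    rintro y x1 ⟨⟨a, ha⟩, hx1A⟩ x2 ⟨⟨b, hb⟩, hx2A⟩
    have hc1 := (hchar x1).mp hx1A
    have hc2 := (hchar x2).mp hx2A
    have e12 : (f.toEquiv ^ (b - a)) x1 = x2 := by
      rw [← ha, zpow_apply_zpow, sub_add_cancel, hb]
    have e21 : (f.toEquiv ^ (a - b)) x2 = x1 := by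
      rw [← hb, zpow_apply_zpow, sub_add_cancel, ha]
    refine Subtype.ext (le_antisymm ?_ ?_)
    · have := hc1 (b - a); rwa [e12] at this
    · have := hc2 (a - b); rwa [e21] at this
end
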